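/- Let V be a finite-dimensional vector space over a field of characteristic zero with a nondegenerate alternating bilinear form ω, and let h ∈ End(V) be diagonalizable (over the field) and symplectic (ω(hx,y) = −ω(x,hy)). Then the restriction of ω to the kernel of h is nondegenerate; in particular, the 0-eigenspace of h is even-dimensional. -/

import Mathlib

theorem stmt4 {k V : Type*} [Field k] [CharZero k]
    [AddCommGroup V] [Module k V] [FiniteDimensional k V]
    (ω : LinearMap.BilinForm k V) (halt : ∀ x, ω x x = 0)
    (hnd : ω.Nondegenerate) (h : Module.End k V)
    (hdiag : (⨆ μ : k, h.eigenspace μ) = ⊤)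
    (hsymp : ∀ x y, ω (h x) y = - ω x (h y)) :
    (∀ x ∈ LinearMap.ker h, (∀ y ∈ LinearMap.ker h, ω x y = 0) → x = 0) ∧
    Even (Module.finrank k ↥(LinearMap.ker h)) := by
  have skew : ∀ x y, ω x y = - ω y x := by
    intro x y
    have := halt (x + y)
    simp only [map_add, LinearMap.add_apply, halt] at this
    linear_combination this
  have key : ∀ x ∈ LinearMap.ker h, (∀ y ∈ LinearMap.ker h, ω x y = 0) → x = 0 := by
    intro x hx hxy
    apply hnd.1
    intro y
    have hy : y ∈ ⨆ μ : k, h.eigenspace μ := hdiag ▸ Submodule.mem_top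
    refine Submodule.iSup_induction (motive := fun z => ω x z = 0) _ hy ?_ (by simp) ?_
    · intro μ z hz
      rcases eq_or_ne μ 0 with rfl | hμ
      · exact hxy z (by rwa [← Module.End.eigenspace_zero])
      · have hz' : h z = μ • z := Module.End.mem_eigenspace_iff.mp hz
        have hx' : h x = 0 := hx
        have : ω (h x) z = - ω x (h z) := hsymp x z
        rw [hx', hz', map_zero, LinearMap.zero_apply, map_smul] at this
        have h2 : μ • ω x z = 0 := by simpa using this.symm
        simpa [smul_eq_mul, hμ] using h2
    · intro y z hy hz
      simp [hy, hz]
  refine ⟨key, ?_⟩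
  set W := LinearMap.ker h with hW
  let ω' := ω.restrict W
  have hnd' : ω'.Nondegenerate := by
    refine ⟨fun m hm => ?_, fun m hm => ?_⟩
    · have := key m.1 m.2 (fun y hy => hm ⟨y, hy⟩)
      exact Subtype.ext this
    · have := key m.1 m.2 (fun y hy => by
        have h0 : ω y m.1 = 0 := hm ⟨y, hy⟩
        rw [skew, h0, neg_zero])
      exact Subtype.ext this
  let b := Module.finBasis k W
  set n := Module.finrank k W with hn
  set M := LinearMap.BilinForm.toMatrix b ω' with hM
  have hdet : M.det ≠ 0 := (LinearMap.BilinForm.nondegenerate_iff_det_ne_zero b).mp hnd'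
  have hskew : M.transpose = -M := by
    ext i j
    simp only [Matrix.transpose_apply, Matrix.neg_apply, hM, LinearMap.BilinForm.toMatrix_apply]
    exact skew (b j : V) (b i)
  rcases Nat.even_or_odd n with he | ho
  · exact he
  · exfalso
    have : M.det = (-1 : k) ^ n * M.det := by
      conv_lhs => rw [← Matrix.det_transpose, hskew, Matrix.det_neg]
      simp
    rw [ho.neg_one_pow] at this
    apply hdet
    have h2 : (2 : k) * M.det = 0 := by linear_combination this
    have := mul_eq_zero.mp h2
    simpa using this
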